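/- Let q ≥ 3 be a power of a prime and n ≥ 1. The graph whose vertex set is HGL_n(F_{q²}) and in which two distinct vertices A, B are joined by an edge exactly when rank(A − B) = 1 is connected. -/

import Mathlib

open Matrix Polynomial Module

/-- Conjugate transpose with respect to the involution `x ↦ x ^ q` on `F = F_{q²}`. -/
def ctrans (q : ℕ) {F : Type*} [Field F] {m n : Type*} (A : Matrix m n F) : Matrix n m F :=
  Matrix.of fun i j => (A j i) ^ q

/-- `A` is hermitian with respect to the involution `x ↦ x ^ q`. -/
def IsHerm (q : ℕ) {F : Type*} [Field F] {n : Type*} (A : Matrix n n F) : Prop :=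
  ctrans q A = A

/-- The rank-one hermitian matrix `x x*`. -/
def outerq (q : ℕ) {F : Type*} [Field F] {n : Type*} (x : n → F) : Matrix n n F :=
  Matrix.of fun i j => x i * (x j) ^ q

/-- The set `{A + λ x x* : λ ∈ F_q, λ ≠ 0}` (the fixed field `F_q` is `{λ : λ ^ q = λ}`). -/
def leafSet (q : ℕ) {F : Type*} [Field F] {n : Type*} (A : Matrix n n F) (x : n → F) :
    Set (Matrix n n F) :=
  {B | ∃ lam : F, lam ^ q = lam ∧ lam ≠ 0 ∧ B = A + lam • outerq q x}

/-- `L` is a leaf of the hermitian matrix `A`: it is of the form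
`{A + λ x x* : λ ∈ F_q, λ ≠ 0}` for a nonzero vector `x` and all of its members have
rank `rank A + 1`. -/
def IsLeafOf (q : ℕ) {F : Type*} [Field F] {n : Type*} [Fintype n] (L : Set (Matrix n n F))
    (A : Matrix n n F) : Prop :=
  ∃ x : n → F, x ≠ 0 ∧ L = leafSet q A x ∧ ∀ B ∈ L, B.rank = A.rank + 1

section aux

set_option linter.unusedSectionVars false
variable {q : ℕ} {F : Type*} [Field F] {m : Type*} [Fintype m] [DecidableEq m]

/-- conjugate of a vector -/
def cjv (q : ℕ) {F : Type*} [Field F] {m : Type*} (v : m → F) : m → F := fun i => v i ^ q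

/-- the sesquilinear form attached to `M` -/
def sqf (q : ℕ) {F : Type*} [Field F] {m : Type*} [Fintype m] (M : Matrix m m F)
    (u w : m → F) : F := dotProduct (cjv q u) (M *ᵥ w)

variable (hadd : ∀ x y : F, (x + y) ^ q = x ^ q + y ^ q)

include hadd in
lemma zero_pow_q : (0 : F) ^ q = 0 := by
  have h := hadd 0 0
  rw [add_zero] at h
  nth_rewrite 1 [← add_zero ((0:F)^q)] at h
  exact (add_left_cancel h).symm

include hadd in
lemma sum_pow_q {ι : Type*} (s : Finset ι) (f : ι → F) :
    (∑ i ∈ s, f i) ^ q = ∑ i ∈ s, f i ^ q := by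
  classical
  induction s using Finset.induction with
  | empty => simpa using zero_pow_q hadd
  | insert _ _ hx ih => rw [Finset.sum_insert hx, Finset.sum_insert hx, hadd, ih]

include hadd in
lemma neg_pow_q (x : F) : (-x) ^ q = -(x ^ q) := by
  have h := hadd x (-x)
  rw [add_neg_cancel, zero_pow_q hadd] at h
  linear_combination -h

lemma herm_apply {M : Matrix m m F} (h : IsHerm q M) (i j : m) : (M j i) ^ q = M i j :=
  congrFun (congrFun h i) j

include hadd in
lemma herm_pull {M : Matrix m m F} (hM : IsHerm q M) (v y : m → F) :
    dotProduct (cjv q (M *ᵥ v)) y = dotProduct (cjv q v) (M *ᵥ y) := by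
  simp only [dotProduct, cjv, mulVec]
  simp only [sum_pow_q hadd, mul_pow, herm_apply hM, Finset.sum_mul, Finset.mul_sum]
  rw [Finset.sum_comm]
  refine Finset.sum_congr rfl fun j _ => Finset.sum_congr rfl fun i _ => by ring

variable (hqq : ∀ x : F, (x ^ q) ^ q = x)

include hadd hqq in
lemma conj_dot (u X : m → F) :
    (dotProduct (cjv q u) X) ^ q = dotProduct (cjv q X) u := by
  simp only [dotProduct, cjv]
  rw [sum_pow_q hadd]
  exact Finset.sum_congr rfl fun i _ => by rw [mul_pow, hqq]; ring

include hadd hqq in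
lemma sqf_swap {M : Matrix m m F} (hM : IsHerm q M) (u w : m → F) :
    (sqf q M u w) ^ q = sqf q M w u := by
  rw [sqf, conj_dot hadd hqq, herm_pull hadd hM, sqf]

include hadd in
lemma cjv_add_smul (u w : m → F) (t : F) :
    cjv q (u + t • w) = cjv q u + t ^ q • cjv q w := by
  funext i
  simp [cjv, hadd, mul_pow]

include hadd hqq in
lemma sqf_expand {M : Matrix m m F} (hM : IsHerm q M) (u w : m → F) (t : F) :
    sqf q M (u + t • w) (u + t • w) =
      sqf q M u u + t * sqf q M u w + t ^ q * (sqf q M u w) ^ q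
        + t ^ (q + 1) * sqf q M w w := by
  have hswap := sqf_swap hadd hqq hM u w
  simp only [sqf, cjv_add_smul hadd, mulVec_add, mulVec_smul, dotProduct_add,
    add_dotProduct, smul_dotProduct, dotProduct_smul, smul_eq_mul] at *
  rw [pow_succ, ← hswap]
  ring

include hadd hqq in
lemma sqf_single {M : Matrix m m F} (i j : m) :
    sqf q M (Pi.single i 1) (Pi.single j 1) = M i j := by
  have h1 : cjv q (Pi.single i (1:F)) = Pi.single i 1 := by
    funext k
    rcases eq_or_ne k i with rfl | hk
    · simp [cjv]
    · simp [cjv, Pi.single_eq_of_ne hk, zero_pow_q hadd]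
  rw [sqf, h1, mulVec_single, single_dotProduct]
  simp

include hadd hqq in
lemma herm_eq_zero {M : Matrix m m F} (hs : ∃ s : F, s ^ q ≠ s) (hM : IsHerm q M)
    (h0 : ∀ v, sqf q M v v = 0) : M = 0 := by
  obtain ⟨s, hs⟩ := hs
  have key : ∀ u w, sqf q M u w = 0 := by
    intro u w
    have h1 := sqf_expand hadd hqq hM u w 1
    have h2 := sqf_expand hadd hqq hM u w s
    rw [h0, h0, h0] at h1 h2
    simp only [one_pow, one_mul, zero_add, mul_zero, add_zero] at h1 h2
    -- h1 : 0 = sqf q M u w + (sqf q M u w)^q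
    have hb : (sqf q M u w) ^ q = -(sqf q M u w) := by linear_combination -h1
    rw [hb] at h2
    have : (s - s ^ q) * sqf q M u w = 0 := by linear_combination -h2
    rcases mul_eq_zero.mp this with h | h
    · exact absurd (by linear_combination -h : s ^ q = s) hs
    · exact h
  ext i j
  have := key (Pi.single i 1) (Pi.single j 1)
  rw [sqf_single hadd hqq] at this
  simpa using this


section count

variable [Fintype F] (hF : Fintype.card F = q ^ 2)

include hF in
lemma exists_pow_q_ne (hq2 : 2 ≤ q) : ∃ s : F, s ^ q ≠ s := by
  by_contra h
  push_neg at h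
  set P : F[X] := X ^ q - X with hP
  have hroot : ∀ s : F, P.eval s = 0 := by
    intro s; simp [hP, h s]
  have hdeg : P.natDegree < Fintype.card F := by
    have : P.natDegree ≤ q := by
      refine (Polynomial.natDegree_sub_le _ _).trans ?_
      simp [Polynomial.natDegree_X_pow, Polynomial.natDegree_X]
      omega
    have : q < q ^ 2 := by nlinarith
    omega
  have hP0 : P = 0 :=
    Polynomial.eq_zero_of_natDegree_lt_card_of_eval_eq_zero P Function.injective_id
      (fun s => hroot s) hdeg
  have : P.coeff q = 1 := by
    simp [hP, Polynomial.coeff_X_pow, Polynomial.coeff_X]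
    omega
  rw [hP0] at this
  simp at this

include hF in
lemma poly_count (hq3 : 3 ≤ q) {a b c d : F} (ha : a ≠ 0) (hd : d ≠ 0)
    (h : ∀ t : F, (a + t * b + t ^ q * b ^ q) * (t * c + t ^ q * c ^ q + t ^ (q + 1) * d) = 0) :
    False := by
  set P₁ : F[X] := C a + C b * X + C (b ^ q) * X ^ q with hP₁
  set P₂ : F[X] := C c * X + C (c ^ q) * X ^ q + C d * X ^ (q + 1) with hP₂
  have hq0 : q ≠ 0 := by omega
  have h₁ : P₁ ≠ 0 := by
    intro h0
    have : P₁.eval 0 = a := by simp [hP₁, zero_pow hq0]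
    rw [h0] at this
    simp at this
    exact ha this.symm
  have h₂ : P₂ ≠ 0 := by
    intro h0
    have : P₂.coeff (q + 1) = d := by
      rw [hP₂, Polynomial.coeff_add, Polynomial.coeff_add, Polynomial.coeff_C_mul,
        Polynomial.coeff_C_mul, Polynomial.coeff_C_mul, Polynomial.coeff_X,
        Polynomial.coeff_X_pow, Polynomial.coeff_X_pow, if_neg (by omega),
        if_neg (by omega), if_pos rfl]
      ring
    rw [h0] at this
    simp at this
    exact hd this.symm
  have hdeg : (P₁ * P₂).natDegree < Fintype.card F := by
    have d1 : P₁.natDegree ≤ q := by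
      refine (Polynomial.natDegree_add_le _ _).trans ?_
      simp only [max_le_iff]
      constructor
      · refine (Polynomial.natDegree_add_le _ _).trans ?_
        simp only [max_le_iff]
        refine ⟨by simp, ?_⟩
        refine (Polynomial.natDegree_mul_le).trans ?_
        simp [Polynomial.natDegree_X]
        omega
      · refine (Polynomial.natDegree_mul_le).trans ?_
        simp [Polynomial.natDegree_X_pow]
    have d2 : P₂.natDegree ≤ q + 1 := by
      refine (Polynomial.natDegree_add_le _ _).trans ?_
      simp only [max_le_iff]
      constructor
      · refine (Polynomial.natDegree_add_le _ _).trans ?_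
        simp only [max_le_iff]
        constructor
        · refine (Polynomial.natDegree_mul_le).trans ?_
          simp [Polynomial.natDegree_X]
        · refine (Polynomial.natDegree_mul_le).trans ?_
          simp [Polynomial.natDegree_X_pow]
      · refine (Polynomial.natDegree_mul_le).trans ?_
        simp [Polynomial.natDegree_X_pow]
    have := Polynomial.natDegree_mul_le (p := P₁) (q := P₂)
    have hc : q + (q + 1) < q ^ 2 := by nlinarith
    rw [hF]
    omega
  have hroot : ∀ t : F, (P₁ * P₂).eval t = 0 := by
    intro t
    have := h t
    simp only [Polynomial.eval_mul, Polynomial.eval_add, Polynomial.eval_pow,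
      Polynomial.eval_X, Polynomial.eval_C, hP₁, hP₂]
    linear_combination this
  have : P₁ * P₂ = 0 :=
    Polynomial.eq_zero_of_natDegree_lt_card_of_eval_eq_zero _ Function.injective_id
      (fun s => hroot s) hdeg
  exact (mul_ne_zero h₁ h₂) this

include hF hadd hqq in
lemma exists_good (hq3 : 3 ≤ q) {M N : Matrix m m F} (hM : IsHerm q M) (hN : IsHerm q N)
    (hM0 : M ≠ 0) (hN0 : N ≠ 0) :
    ∃ v, sqf q M v v ≠ 0 ∧ sqf q N v v ≠ 0 := by
  by_contra hcon
  push_neg at hcon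
  have hs : ∃ s : F, s ^ q ≠ s := exists_pow_q_ne hF (by omega)
  obtain ⟨u, hu⟩ : ∃ u, sqf q M u u ≠ 0 := by
    by_contra h
    push_neg at h
    exact hM0 (herm_eq_zero hadd hqq hs hM h)
  obtain ⟨w, hw⟩ : ∃ w, sqf q N w w ≠ 0 := by
    by_contra h
    push_neg at h
    exact hN0 (herm_eq_zero hadd hqq hs hN h)
  have hNu : sqf q N u u = 0 := hcon u hu
  have hMw : sqf q M w w = 0 := by
    by_contra h
    exact hw (hcon w h)
  refine poly_count hF hq3 (b := sqf q M u w) (c := sqf q N u w) hu hw (fun t => ?_)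
  have h1 := sqf_expand hadd hqq hM u w t
  have h2 := sqf_expand hadd hqq hN u w t
  rw [hMw, mul_zero, add_zero] at h1
  rw [hNu, zero_add] at h2
  rw [← h1, ← h2]
  by_cases hM' : sqf q M (u + t • w) (u + t • w) = 0
  · exact mul_eq_zero_of_left hM' _
  · exact mul_eq_zero_of_right _ (hcon _ hM')

end count

lemma outer_mulVec (x w : m → F) :
    outerq q x *ᵥ w = (dotProduct (cjv q x) w) • x := by
  funext i
  simp only [mulVec, dotProduct, outerq, Matrix.of_apply, cjv, Pi.smul_apply, smul_eq_mul,
    Finset.sum_mul]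
  exact Finset.sum_congr rfl fun j _ => by ring

lemma rank_smul_outer {lam : F} {x : m → F} (hlam : lam ≠ 0) (hx : x ≠ 0) :
    (lam • outerq q x).rank = 1 := by
  obtain ⟨i, hi⟩ : ∃ i, x i ≠ 0 := by
    by_contra h
    push_neg at h
    exact hx (funext h)
  have hrange : LinearMap.range (lam • outerq q x).mulVecLin = Submodule.span F {x} := by
    apply le_antisymm
    · rintro y ⟨w, rfl⟩
      rw [mulVecLin_apply, smul_mulVec, outer_mulVec]
      exact Submodule.smul_mem _ _ (Submodule.smul_mem _ _
        (Submodule.mem_span_singleton_self x))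
    · rw [Submodule.span_le, Set.singleton_subset_iff]
      refine ⟨Pi.single i (lam * x i ^ q)⁻¹, ?_⟩
      rw [mulVecLin_apply, smul_mulVec, outer_mulVec]
      have hd : dotProduct (cjv q x) (Pi.single i (lam * x i ^ q)⁻¹)
          = x i ^ q * (lam * x i ^ q)⁻¹ := by
        simp [dotProduct, cjv, Pi.single_apply]
      rw [hd, smul_smul]
      have hne : lam * x i ^ q ≠ 0 := mul_ne_zero hlam (pow_ne_zero _ hi)
      rw [show lam * (x i ^ q * (lam * x i ^ q)⁻¹) = (lam * x i ^ q) * (lam * x i ^ q)⁻¹ by ring,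
        mul_inv_cancel₀ hne, one_smul]
  rw [Matrix.rank, hrange, finrank_span_singleton hx]

lemma eq_zero_of_rank_eq_zero {M : Matrix m m F} (h : M.rank = 0) : M = 0 := by
  rw [Matrix.rank] at h
  have hr : LinearMap.range M.mulVecLin = ⊥ := Submodule.finrank_eq_zero.mp h
  ext i j
  have h2 : M.mulVecLin (Pi.single j 1) = 0 := by
    have : M.mulVecLin (Pi.single j 1) ∈ (⊥ : Submodule F (m → F)) :=
      hr ▸ LinearMap.mem_range_self _ _
    simpa using this
  have h3 := congrFun h2 j
  have h4 := congrFun h2 i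
  simp only [mulVecLin_apply, mulVec_single, mul_one, Pi.zero_apply] at h4
  simpa using h4

lemma rank_succ_le {M M' : Matrix m m F} (hsub : ∀ w, M *ᵥ w = 0 → M' *ᵥ w = 0)
    (v : m → F) (hv : M *ᵥ v ≠ 0) (hv' : M' *ᵥ v = 0) : M'.rank + 1 ≤ M.rank := by
  have hk : LinearMap.ker M.mulVecLin < LinearMap.ker M'.mulVecLin := by
    rw [SetLike.lt_iff_le_and_exists]
    refine ⟨fun w hw => ?_, v, ?_, ?_⟩
    · rw [LinearMap.mem_ker, mulVecLin_apply] at hw ⊢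
      exact hsub w hw
    · rw [LinearMap.mem_ker, mulVecLin_apply]
      exact hv'
    · rw [LinearMap.mem_ker, mulVecLin_apply]
      exact hv
  have h1 := LinearMap.finrank_range_add_finrank_ker M.mulVecLin
  have h2 := LinearMap.finrank_range_add_finrank_ker M'.mulVecLin
  have h3 := Submodule.finrank_lt_finrank_of_lt hk
  rw [Matrix.rank, Matrix.rank]
  omega

include hadd in
lemma ctrans_mul (P Q : Matrix m m F) : ctrans q (P * Q) = ctrans q Q * ctrans q P := by
  ext i j
  simp only [ctrans, Matrix.of_apply, Matrix.mul_apply, sum_pow_q hadd, mul_pow]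
  exact Finset.sum_congr rfl fun k _ => by ring

lemma ctrans_one (hq0 : q ≠ 0) : ctrans q (1 : Matrix m m F) = 1 := by
  ext i j
  rcases eq_or_ne i j with rfl | h
  · simp [ctrans, Matrix.one_apply]
  · simp [ctrans, Matrix.one_apply, h, Ne.symm h, zero_pow hq0]

include hadd in
lemma ctrans_sub (P Q : Matrix m m F) : ctrans q (P - Q) = ctrans q P - ctrans q Q := by
  ext i j
  simp only [ctrans, Matrix.of_apply, Matrix.sub_apply]
  rw [sub_eq_add_neg, hadd, neg_pow_q hadd, ← sub_eq_add_neg]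

include hadd in
lemma herm_sub {A B : Matrix m m F} (hA : IsHerm q A) (hB : IsHerm q B) :
    IsHerm q (A - B) := by
  rw [IsHerm, ctrans_sub hadd, hA, hB]

include hadd in
lemma herm_add_smul_outer (hqq : ∀ x : F, (x ^ q) ^ q = x) {B : Matrix m m F} {lam : F}
    {x : m → F} (hB : IsHerm q B) (hlam : lam ^ q = lam) :
    IsHerm q (B + lam • outerq q x) := by
  have houter : IsHerm q (lam • outerq q x) := by
    ext i j
    show (lam * (x j * (x i) ^ q)) ^ q = lam * (x i * (x j) ^ q)
    rw [mul_pow, mul_pow, hqq, hlam]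
    ring
  ext i j
  have h1 := congrFun (congrFun hB i) j
  have h2 := congrFun (congrFun houter i) j
  show ((B + lam • outerq q x) j i) ^ q = _
  rw [Matrix.add_apply]
  rw [hadd]
  show (B j i) ^ q + ((lam • outerq q x) j i) ^ q = _
  rw [show (B j i) ^ q = B i j from h1, show ((lam • outerq q x) j i) ^ q = (lam • outerq q x) i j from h2]
  rfl

include hadd in
lemma ctrans_inv {B : Matrix m m F} (hq0 : q ≠ 0) (hB : IsHerm q B) (hU : IsUnit B) :
    ctrans q B⁻¹ = B⁻¹ := by
  have h1 : ctrans q B⁻¹ * B = 1 := by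
    have h := ctrans_mul hadd B B⁻¹
    rw [Matrix.mul_nonsing_inv B ((Matrix.isUnit_iff_isUnit_det B).mp hU),
      ctrans_one hq0, hB] at h
    exact h.symm
  exact (Matrix.inv_eq_left_inv h1).symm

include hadd in
lemma herm_N {A B : Matrix m m F} (hq0 : q ≠ 0) (hA : IsHerm q A) (hB : IsHerm q B)
    (hUB : IsUnit B) : IsHerm q ((A - B) * B⁻¹ * A) := by
  have e : (A - B) * B⁻¹ * A = A * B⁻¹ * A - A := by
    rw [Matrix.sub_mul, Matrix.sub_mul,
      Matrix.mul_nonsing_inv B ((Matrix.isUnit_iff_isUnit_det B).mp hUB), Matrix.one_mul]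
  rw [e, IsHerm, ctrans_sub hadd, ctrans_mul hadd, ctrans_mul hadd, hA,
    ctrans_inv hadd hq0 hB hUB, Matrix.mul_assoc]

end aux

/-- **Lemma 2.5.** For a prime power `q ≥ 3` and `n ≥ 1`, the graph on the invertible
hermitian `n × n` matrices over `F_{q²}`, with edges given by `rank (A - B) = 1`,
is connected. -/


theorem stmt5 (q n : ℕ) (hq : IsPrimePow q) (hq3 : 3 ≤ q) (hn : 1 ≤ n)
    (F : Type*) [Field F] [Fintype F] (hF : Fintype.card F = q ^ 2) :
    (SimpleGraph.fromRel
      (fun A B : {A : Matrix (Fin n) (Fin n) F // IsHerm q A ∧ IsUnit A} =>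
        (A.1 - B.1).rank = 1)).Connected := by
  classical
  obtain ⟨p, k, hp, hk, hpk⟩ := hq
  have hp' : Nat.Prime p := hp.nat_prime
  haveI : Fact (Nat.Prime p) := ⟨hp'⟩
  haveI : CharP F (ringChar F) := ringChar.charP F
  obtain ⟨m, hm1, hm2⟩ := FiniteField.card F (ringChar F)
  have hch : ringChar F = p := by
    have h1 : ringChar F ∣ p ^ (k * 2) := by
      calc ringChar F ∣ ringChar F ^ (m : ℕ) := dvd_pow_self _ m.2.ne'
        _ = Fintype.card F := hm2.symm
        _ = p ^ (k * 2) := by rw [hF, ← hpk, ← pow_mul]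
    exact (Nat.prime_dvd_prime_iff_eq hm1 hp').mp (hm1.dvd_of_dvd_pow h1)
  haveI : CharP F p := hch ▸ ringChar.charP F
  have hq0 : q ≠ 0 := by omega
  have hadd : ∀ x y : F, (x + y) ^ q = x ^ q + y ^ q := by
    intro x y
    rw [← hpk]
    exact add_pow_char_pow x y p k
  have hqq : ∀ x : F, (x ^ q) ^ q = x := by
    intro x
    rw [← pow_mul, ← sq, ← hF]
    exact FiniteField.pow_card x
  rw [SimpleGraph.connected_iff]
  refine ⟨?_, ⟨⟨1, ctrans_one hq0, isUnit_one⟩⟩⟩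
  set V := {A : Matrix (Fin n) (Fin n) F // IsHerm q A ∧ IsUnit A} with hV
  set G := SimpleGraph.fromRel (fun A B : V => (A.1 - B.1).rank = 1) with hG
  have key : ∀ r : ℕ, ∀ A B : V, (A.1 - B.1).rank ≤ r → G.Reachable A B := by
    intro r
    induction r with
    | zero =>
      intro A B h
      have h0 : A.1 - B.1 = 0 := eq_zero_of_rank_eq_zero (Nat.le_zero.mp h)
      have : A = B := Subtype.ext (by rwa [sub_eq_zero] at h0)
      rw [this]
    | succ r ih =>
      intro A B h
      by_cases hle : (A.1 - B.1).rank ≤ r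
      · exact ih A B hle
      have hrank : (A.1 - B.1).rank = r + 1 := le_antisymm h (by omega)
      set M : Matrix (Fin n) (Fin n) F := A.1 - B.1 with hM
      have hMherm : IsHerm q M := herm_sub hadd A.2.1 B.2.1
      have hM0 : M ≠ 0 := by
        intro h0
        rw [h0, Matrix.rank_zero] at hrank
        omega
      have hBdet := (Matrix.isUnit_iff_isUnit_det _).mp B.2.2
      have hAdet := (Matrix.isUnit_iff_isUnit_det _).mp A.2.2
      set N : Matrix (Fin n) (Fin n) F := M * B.1⁻¹ * A.1 with hN
      have hNherm : IsHerm q N := herm_N hadd hq0 A.2.1 B.2.1 B.2.2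
      have hN0 : N ≠ 0 := by
        intro h0
        apply hM0
        have e : M = N * A.1⁻¹ * B.1 := by
          rw [hN, Matrix.mul_assoc (M * B.1⁻¹), Matrix.mul_nonsing_inv _ hAdet,
            Matrix.mul_one, Matrix.mul_assoc, Matrix.nonsing_inv_mul _ hBdet, Matrix.mul_one]
        rw [e, h0, Matrix.zero_mul, Matrix.zero_mul]
      obtain ⟨v, hvM, hvN⟩ := exists_good hadd hqq hF hq3 hMherm hNherm hM0 hN0
      set c : F := sqf q M v v with hc
      set x : Fin n → F := M *ᵥ v with hx
      have hx0 : x ≠ 0 := by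
        intro h0
        apply hvM
        rw [hc, sqf, ← hx, h0, dotProduct_zero]
      have hcq : c ^ q = c := sqf_swap hadd hqq hMherm v v
      have hlam0 : (c⁻¹ : F) ≠ 0 := inv_ne_zero hvM
      have hlamq : (c⁻¹ : F) ^ q = c⁻¹ := by rw [inv_pow, hcq]
      set Cm : Matrix (Fin n) (Fin n) F := B.1 + c⁻¹ • outerq q x with hCm
      have hCherm : IsHerm q Cm := herm_add_smul_outer hadd hqq B.2.1 hlamq
      have hgam : dotProduct (cjv q x) (B.1⁻¹ *ᵥ x) = sqf q N v v - c := by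
        have e : M * B.1⁻¹ * M = N - M := by
          rw [hN, hM, Matrix.mul_sub, Matrix.mul_assoc _ _ B.1,
            Matrix.nonsing_inv_mul _ hBdet, Matrix.mul_one]
        calc dotProduct (cjv q x) (B.1⁻¹ *ᵥ x)
            = dotProduct (cjv q (M *ᵥ v)) (B.1⁻¹ *ᵥ (M *ᵥ v)) := by rw [hx]
          _ = dotProduct (cjv q v) (M *ᵥ (B.1⁻¹ *ᵥ (M *ᵥ v))) := herm_pull hadd hMherm v _
          _ = dotProduct (cjv q v) ((M * B.1⁻¹ * M) *ᵥ v) := by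
              rw [mulVec_mulVec, mulVec_mulVec]
          _ = sqf q N v v - c := by
              rw [e, Matrix.sub_mulVec, dotProduct_sub, hc]
              rfl
      have hCunit : IsUnit Cm := by
        rw [Matrix.isUnit_iff_isUnit_det, isUnit_iff_ne_zero]
        intro hdet
        obtain ⟨w, hw0, hww⟩ := (Matrix.exists_mulVec_eq_zero_iff).mpr hdet
        rw [hCm, Matrix.add_mulVec, smul_mulVec, outer_mulVec] at hww
        set s : F := dotProduct (cjv q x) w with hs
        have hBw : B.1 *ᵥ w = -((c⁻¹ * s) • x) := by
          rw [smul_smul] at hww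
          exact eq_neg_of_add_eq_zero_left hww
        have hw : w = -((c⁻¹ * s) • (B.1⁻¹ *ᵥ x)) := by
          have h2 := congrArg (fun y => B.1⁻¹ *ᵥ y) hBw
          simpa [mulVec_mulVec, Matrix.nonsing_inv_mul _ hBdet, Matrix.mulVec_neg,
            Matrix.mulVec_smul] using h2
        have hs_eq : s = -(c⁻¹ * s * (sqf q N v v - c)) := by
          conv_lhs => rw [hs, hw]
          rw [dotProduct_neg, dotProduct_smul, smul_eq_mul, hgam]
        by_cases hs0 : s = 0
        · apply hw0
          rw [hw, hs0]
          simp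
        · apply hvN
          have h0 : s + c⁻¹ * s * (sqf q N v v - c) = 0 := by linear_combination hs_eq
          have h1 := congrArg (fun z => c * z) h0
          simp only [mul_zero, mul_add] at h1
          have hlc : c * c⁻¹ = 1 := mul_inv_cancel₀ hvM
          have key2 : s * sqf q N v v = 0 := by
            linear_combination h1 - (s * (sqf q N v v - c)) * hlc
          exact (mul_eq_zero.mp key2).resolve_left hs0
      have hACm : A.1 - Cm = M - c⁻¹ • outerq q x := by
        rw [hCm, hM]
        abel
      have hCv1 : (⟨Cm, hCherm, hCunit⟩ : V).1 = Cm := rfl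
      have hstep : (A.1 - Cm).rank + 1 ≤ M.rank := by
        refine rank_succ_le (fun w hw => ?_) v ?_ ?_
        · rw [hACm, Matrix.sub_mulVec, hw, smul_mulVec, outer_mulVec]
          have hd : dotProduct (cjv q x) w = 0 := by
            rw [hx, herm_pull hadd hMherm v w, hw, dotProduct_zero]
          rw [hd, zero_smul, smul_zero, sub_zero]
        · rw [← hx]; exact hx0
        · rw [hACm, Matrix.sub_mulVec, smul_mulVec, outer_mulVec]
          have hd : dotProduct (cjv q x) v = c := by
            rw [hx, herm_pull hadd hMherm v v, hc]
            rfl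
          rw [hd, smul_smul, inv_mul_cancel₀ hvM, one_smul, ← hx, sub_self]
      have hreachAC : G.Reachable A ⟨Cm, hCherm, hCunit⟩ := by
        apply ih
        rw [hCv1]
        omega
      have hadj : G.Adj (⟨Cm, hCherm, hCunit⟩ : V) B := by
        rw [hG, SimpleGraph.fromRel_adj]
        have hrk : (Cm - B.1).rank = 1 := by
          rw [hCm, add_sub_cancel_left]
          exact rank_smul_outer hlam0 hx0
        refine ⟨?_, Or.inl hrk⟩
        intro he
        have : Cm = B.1 := congrArg Subtype.val he
        rw [this, sub_self, Matrix.rank_zero] at hrk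
        omega
      exact hreachAC.trans hadj.reachable
  intro A B
  exact key ((A.1 - B.1).rank) A B le_rfl
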